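/- arXiv:2312.09315 — 3 statements merged into one kernel-verified Lean document; each statement's English description precedes it below -/
import Mathlib

section
/- Let p and q be prime numbers, and let H be the cyclic group C_p × C_q if p ≠ q, and H = C_p if p = q. Then there exists a prime r with pq dividing r − 1 and a semidirect product R = F_r ⋊ H (where H acts faithfully on the additive group of the field F_r of r elements by multiplication by units) such that R is generated by an element of order p together with an element of order q. -/
open Multiplicative SemidirectProduct

/-- Multiplication by a unit as an automorphism of the additive group `ZMod r`,
viewed multiplicatively. -/
private def unitAut (r : ℕ) (v : (ZMod r)ˣ) : MulAut (Multiplicative (ZMod r)) where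
  toFun z := ofAdd ((v : ZMod r) * z.toAdd)
  invFun z := ofAdd (((v⁻¹ : (ZMod r)ˣ) : ZMod r) * z.toAdd)
  left_inv z := by simp [← mul_assoc, ← Units.val_mul]
  right_inv z := by simp [← mul_assoc, ← Units.val_mul]
  map_mul' a b := by simp [mul_add, ← ofAdd_add]

@[simp] private lemma unitAut_apply (r : ℕ) (v : (ZMod r)ˣ) (z : Multiplicative (ZMod r)) :
    unitAut r v z = ofAdd ((v : ZMod r) * z.toAdd) := rfl

private def unitAutHom (r : ℕ) : (ZMod r)ˣ →* MulAut (Multiplicative (ZMod r)) :=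
  MonoidHom.mk' (unitAut r) (fun a b => by
    ext z
    simp [MulAut.mul_apply, mul_assoc])

@[simp] private lemma unitAutHom_apply (r : ℕ) (v : (ZMod r)ˣ) (z : Multiplicative (ZMod r)) :
    unitAutHom r v z = ofAdd ((v : ZMod r) * z.toAdd) := rfl

private def chi (n r : ℕ) [NeZero n] (u : (ZMod r)ˣ) (hu : orderOf u = n) :
    Multiplicative (ZMod n) →* (ZMod r)ˣ :=
  MonoidHom.mk' (fun h => u ^ h.toAdd.val) (fun a b => by
    show u ^ (a.toAdd + b.toAdd).val = u ^ a.toAdd.val * u ^ b.toAdd.val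
    have h := pow_mod_orderOf u (a.toAdd.val + b.toAdd.val)
    rw [hu] at h
    rw [ZMod.val_add, h, pow_add])

@[simp] private lemma chi_apply (n r : ℕ) [NeZero n] (u : (ZMod r)ˣ) (hu : orderOf u = n)
    (h : Multiplicative (ZMod n)) : chi n r u hu h = u ^ h.toAdd.val := rfl

private lemma key {p q n r : ℕ} (hr : r.Prime) (hn : 0 < n) (hnd : n ∣ r - 1)
    (hp1 : 1 < p) (hqp : q.Prime) (s t : ZMod n)
    (hs : addOrderOf s = p) (ht : addOrderOf t = q)
    (hst : ∀ z : Multiplicative (ZMod n),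
      z ∈ Subgroup.closure {Multiplicative.ofAdd s, Multiplicative.ofAdd t}) :
    ∃ φ : Multiplicative (ZMod n) →* MulAut (Multiplicative (ZMod r)),
      Function.Injective φ ∧
      (∀ h, ∃ u : (ZMod r)ˣ, ∀ z : Multiplicative (ZMod r),
        Multiplicative.toAdd ((φ h) z) = (u : ZMod r) * Multiplicative.toAdd z) ∧
      ∃ x y : Multiplicative (ZMod r) ⋊[φ] Multiplicative (ZMod n),
        orderOf x = p ∧ orderOf y = q ∧ Subgroup.closure {x, y} = ⊤ := by
  haveI := Fact.mk hr
  haveI := Fact.mk hqp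
  haveI : NeZero n := ⟨hn.ne'⟩
  have hq : 1 < q := hqp.one_lt
  have hr1 : 1 < r := hr.one_lt
  -- find a unit of order `n`
  obtain ⟨g, hg⟩ := IsCyclic.exists_generator (α := (ZMod r)ˣ)
  have hgord : orderOf g = r - 1 := by
    rw [orderOf_eq_card_of_forall_mem_zpowers hg, Nat.card_eq_fintype_card, ZMod.card_units]
  obtain ⟨k, hk⟩ := hnd
  have hk0 : k ≠ 0 := by rintro rfl; omega
  set u : (ZMod r)ˣ := g ^ k with hu
  have huord : orderOf u = n := by
    rw [hu, orderOf_pow_of_dvd hk0 (by rw [hgord, hk]; exact dvd_mul_left k n), hgord, hk,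
      Nat.mul_div_cancel _ (Nat.pos_of_ne_zero hk0)]
  -- order of powers of `u`
  have hufin : IsOfFinOrder u := by rw [← orderOf_pos_iff, huord]; exact hn
  have hord : ∀ a : ZMod n, orderOf (u ^ a.val) = addOrderOf a := by
    intro a
    rw [hufin.orderOf_pow, huord]
    conv_rhs => rw [← ZMod.natCast_rightInverse a]
    rw [ZMod.addOrderOf_coe _ hn.ne']
  set φ : Multiplicative (ZMod n) →* MulAut (Multiplicative (ZMod r)) :=
    (unitAutHom r).comp (chi n r u huord) with hφ
  have hφapp : ∀ (h : Multiplicative (ZMod n)) (z : Multiplicative (ZMod r)),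
      φ h z = ofAdd (((u ^ h.toAdd.val : (ZMod r)ˣ) : ZMod r) * z.toAdd) := fun h z => rfl
  refine ⟨φ, ?_, fun h => ⟨u ^ h.toAdd.val, fun z => by rw [hφapp]; simp⟩, ?_⟩
  · -- injectivity
    intro a b hab
    have h1 := congrArg (fun f : MulAut (Multiplicative (ZMod r)) =>
      Multiplicative.toAdd (f (ofAdd (1 : ZMod r)))) hab
    simp only [hφapp, toAdd_ofAdd, mul_one] at h1
    have h2 : u ^ a.toAdd.val = u ^ b.toAdd.val := Units.ext h1
    rw [pow_eq_pow_iff_modEq, huord] at h2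
    have ha := ZMod.val_lt a.toAdd
    have hb := ZMod.val_lt b.toAdd
    have h3 : a.toAdd.val = b.toAdd.val := by
      unfold Nat.ModEq at h2
      rwa [Nat.mod_eq_of_lt ha, Nat.mod_eq_of_lt hb] at h2
    exact toAdd.injective (ZMod.val_injective n h3)
  -- the generators
  set x : Multiplicative (ZMod r) ⋊[φ] Multiplicative (ZMod n) := inr (ofAdd s) with hx
  set y : Multiplicative (ZMod r) ⋊[φ] Multiplicative (ZMod n) :=
    ⟨ofAdd (1 : ZMod r), ofAdd t⟩ with hy
  have hordx : orderOf x = p := by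
    rw [hx, orderOf_injective inr inr_injective, orderOf_ofAdd_eq_addOrderOf, hs]
  -- value of the multiplier for y
  set v : ZMod r := ((u ^ t.val : (ZMod r)ˣ) : ZMod r) with hv
  have hvq : orderOf (u ^ t.val) = q := by rw [hord]; exact ht
  have hvpow : v ^ q = 1 := by
    rw [hv, ← Units.val_pow_eq_pow_val, ← hvq, pow_orderOf_eq_one, Units.val_one]
  have hvne : v ≠ 1 := by
    intro hv1
    have h2 : (u ^ t.val) = 1 := Units.ext (by rw [← hv, hv1, Units.val_one])
    rw [h2, orderOf_one] at hvq
    omega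
  have hypow : ∀ m : ℕ, y ^ m =
      ⟨ofAdd (∑ i ∈ Finset.range m, v ^ i), ofAdd t ^ m⟩ := by
    intro m
    induction m with
    | zero => exact SemidirectProduct.ext (by simp) (by simp)
    | succ m ih =>
      rw [pow_succ', ih]
      refine SemidirectProduct.ext ?_ ?_
      · show y.left * φ y.right (ofAdd (∑ i ∈ Finset.range m, v ^ i)) =
          ofAdd (∑ i ∈ Finset.range (m + 1), v ^ i)
        rw [hy]
        simp only [hφapp, toAdd_ofAdd, ← hv]
        rw [← ofAdd_add, geom_sum_succ]
        congr 1
        ring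
      · show y.right * ofAdd t ^ m = ofAdd t ^ (m + 1)
        rw [pow_succ']
  have hyq : y ^ q = 1 := by
    rw [hypow q, geom_sum_eq hvne, hvpow, sub_self, zero_div]
    refine SemidirectProduct.ext (by simp) ?_
    show ofAdd t ^ q = 1
    rw [← ht, ← orderOf_ofAdd_eq_addOrderOf, pow_orderOf_eq_one]
  have hyne : y ≠ 1 := by
    intro h1
    have h2 := congrArg
      (fun w : Multiplicative (ZMod r) ⋊[φ] Multiplicative (ZMod n) => toAdd w.left) h1
    simp only [hy, one_left, toAdd_one, toAdd_ofAdd] at h2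
    exact one_ne_zero h2
  have hordy : orderOf y = q := orderOf_eq_prime hyq hyne
  refine ⟨x, y, hordx, hordy, ?_⟩
  -- generation
  set K := Subgroup.closure {x, y} with hK
  have hxK : x ∈ K := Subgroup.subset_closure (by simp)
  have hyK : y ∈ K := Subgroup.subset_closure (by simp)
  -- quotient helper
  have hquot : ∀ a b : Multiplicative (ZMod r) ⋊[φ] Multiplicative (ZMod n),
      a.right = b.right → a * b⁻¹ = inl (a.left * b.left⁻¹) := by
    intro a b hab
    refine SemidirectProduct.ext ?_ ?_
    · simp [mul_left, inv_left, left_inl, hab, map_inv, MulAut.apply_inv_self]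
    · simp [mul_right, inv_right, right_inl, hab]
  -- the commutator lies in K and is a nontrivial element of the base
  set d : ZMod r := ((u ^ s.val : (ZMod r)ˣ) : ZMod r) - 1 with hd
  have hdne : d ≠ 0 := by
    intro h0
    have h1 : ((u ^ s.val : (ZMod r)ˣ) : ZMod r) = 1 := by
      have := sub_eq_zero.mp h0; simpa using this
    have h2 : (u ^ s.val) = 1 := Units.ext (by simpa using h1)
    have h3 := hord s
    rw [h2, orderOf_one, hs] at h3
    omega
  have hcomm : (x * y) * (y * x)⁻¹ = inl (ofAdd d) := by
    rw [hquot (x * y) (y * x) (by simp [mul_comm])]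
    congr 1
    rw [hx, hy]
    simp only [mul_left, left_inr, right_inr, one_mul, mul_one, hφapp, toAdd_ofAdd, toAdd_one,
      mul_zero, ofAdd_zero, mul_one]
    rw [← ofAdd_neg, ← ofAdd_add, hd, sub_eq_add_neg]
  have hcK : inl (ofAdd d) ∈ K := by
    rw [← hcomm]
    exact mul_mem (mul_mem hxK hyK) (inv_mem (mul_mem hyK hxK))
  -- all of the base is in K
  have hbase : ∀ e : ZMod r, inl (ofAdd e) ∈ K := by
    intro e
    have h1 : inl (ofAdd d) ^ (e * d⁻¹).val ∈ K := pow_mem hcK _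
    have h2 : (inl (ofAdd d) : Multiplicative (ZMod r) ⋊[φ] Multiplicative (ZMod n))
        ^ (e * d⁻¹).val = inl (ofAdd e) := by
      rw [← map_pow]
      congr 1
      rw [← ofAdd_nsmul]
      congr 1
      rw [nsmul_eq_mul, ZMod.natCast_rightInverse (e * d⁻¹), mul_assoc,
        inv_mul_cancel₀ hdne, mul_one]
    rwa [h2] at h1
  -- conclude
  rw [eq_top_iff]
  rintro a -
  have hmap : ∃ b ∈ K, rightHom b = rightHom a := by
    have hle : Subgroup.closure {ofAdd s, ofAdd t} ≤ Subgroup.map rightHom K := by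
      rw [Subgroup.closure_le]
      rintro z (rfl | rfl)
      · exact ⟨x, hxK, by rw [hx]; exact rightHom_inr _⟩
      · exact ⟨y, hyK, rfl⟩
    obtain ⟨b, hbK, hb⟩ := hle (hst (rightHom a))
    exact ⟨b, hbK, hb⟩
  obtain ⟨b, hbK, hb⟩ := hmap
  have hbr : a.right = b.right := hb.symm
  have h1 : a * b⁻¹ = inl (a.left * b.left⁻¹) := hquot a b hbr
  have h2 : a * b⁻¹ ∈ K := by
    rw [h1]
    obtain ⟨e, he⟩ : ∃ e, a.left * b.left⁻¹ = ofAdd e := ⟨toAdd (a.left * b.left⁻¹), by simp⟩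
    rw [he]
    exact hbase e
  have h3 : a = (a * b⁻¹) * b := by group
  rw [h3]
  exact mul_mem h2 hbK

/-- For primes `p`, `q`, with `H = C_p × C_q` (encoded as the cyclic group
`ZMod (p*q)` when `p ≠ q`, and `ZMod p` when `p = q`), there is a prime `r` with
`p*q ∣ r - 1` and a semidirect product `R = F_r ⋊ H`, with `H` acting faithfully on the
additive group of `F_r` by multiplication by units, such that `R` is generated by an
element of order `p` together with an element of order `q`. -/
theorem stmt_0 (p q : ℕ) (hp : p.Prime) (hq : q.Prime) :
    ∃ r : ℕ, r.Prime ∧ p * q ∣ r - 1 ∧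
      ∃ φ : Multiplicative (ZMod (if p = q then p else p * q)) →*
          MulAut (Multiplicative (ZMod r)),
        Function.Injective φ ∧
        (∀ h, ∃ u : (ZMod r)ˣ, ∀ z : Multiplicative (ZMod r),
          Multiplicative.toAdd ((φ h) z) = (u : ZMod r) * Multiplicative.toAdd z) ∧
        ∃ x y : Multiplicative (ZMod r) ⋊[φ]
            Multiplicative (ZMod (if p = q then p else p * q)),
          orderOf x = p ∧ orderOf y = q ∧ Subgroup.closure {x, y} = ⊤ := by
  have hpq0 : p * q ≠ 0 := Nat.mul_ne_zero hp.pos.ne' hq.pos.ne'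
  obtain ⟨r, hr, hrgt, hrmod⟩ := Nat.exists_prime_gt_modEq_one (p * q) hpq0
  have hdvd : p * q ∣ r - 1 := (Nat.modEq_iff_dvd' hr.one_lt.le).mp hrmod.symm
  refine ⟨r, hr, hdvd, ?_⟩
  by_cases hpq : p = q
  · subst hpq
    rw [if_pos rfl]
    refine key hr hp.pos (dvd_trans (dvd_mul_right p p) hdvd) hp.one_lt hp
      1 1 (ZMod.addOrderOf_one p) (ZMod.addOrderOf_one p) ?_
    intro z
    haveI : NeZero p := ⟨hp.pos.ne'⟩
    have h1 : z = (ofAdd (1 : ZMod p)) ^ z.toAdd.val := by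
      rw [← ofAdd_nsmul, Nat.smul_one_eq_cast, ZMod.natCast_rightInverse z.toAdd, ofAdd_toAdd]
    rw [h1]
    exact pow_mem (Subgroup.subset_closure (by simp)) _
  · rw [if_neg hpq]
    haveI : NeZero (p * q) := ⟨hpq0⟩
    have hco : Nat.Coprime p q := (Nat.coprime_primes hp hq).mpr hpq
    have hs : addOrderOf ((q : ZMod (p * q))) = p := by
      rw [ZMod.addOrderOf_coe _ hpq0, Nat.gcd_eq_right (dvd_mul_left q p),
        Nat.mul_div_cancel _ hq.pos]
    have ht : addOrderOf ((p : ZMod (p * q))) = q := by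
      rw [ZMod.addOrderOf_coe _ hpq0, Nat.gcd_eq_right (dvd_mul_right p q),
        Nat.mul_div_cancel_left _ hp.pos]
    refine key hr (Nat.pos_of_ne_zero hpq0) hdvd hp.one_lt hq
      ((q : ZMod (p * q))) ((p : ZMod (p * q))) hs ht ?_
    intro z
    set S : Set (Multiplicative (ZMod (p * q))) :=
      {ofAdd ((q : ZMod (p * q))), ofAdd ((p : ZMod (p * q)))} with hS
    have hone : ofAdd (1 : ZMod (p * q)) ∈ Subgroup.closure S := by
      have hbez : (1 : ℤ) = p * Nat.gcdA p q + q * Nat.gcdB p q := by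
        have h := Nat.gcd_eq_gcd_ab p q
        rwa [hco.gcd_eq_one] at h
      have h1 : (1 : ZMod (p * q)) =
          (Nat.gcdA p q) • (p : ZMod (p * q)) + (Nat.gcdB p q) • (q : ZMod (p * q)) := by
        have h := congrArg (fun w : ℤ => (w : ZMod (p * q))) hbez
        push_cast at h
        rw [h]
        simp only [zsmul_eq_mul]
        ring
      have h2 : ofAdd (1 : ZMod (p * q)) =
          (ofAdd ((p : ZMod (p * q)))) ^ (Nat.gcdA p q) *
          (ofAdd ((q : ZMod (p * q)))) ^ (Nat.gcdB p q) := by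
        rw [← ofAdd_zsmul, ← ofAdd_zsmul, ← ofAdd_add, h1]
      rw [h2]
      exact mul_mem (zpow_mem (Subgroup.subset_closure (by simp [hS])) _)
        (zpow_mem (Subgroup.subset_closure (by simp [hS])) _)
    have h1 : z = (ofAdd (1 : ZMod (p * q))) ^ z.toAdd.val := by
      rw [← ofAdd_nsmul, Nat.smul_one_eq_cast, ZMod.natCast_rightInverse z.toAdd, ofAdd_toAdd]
    rw [h1]
    exact pow_mem hone _
end

section
/- Let G = G_1 * G_2 be the free product of two nontrivial finite groups with |G_1| + |G_2| > 4, choose nonidentity elements g_1 ∈ G_1 and g_2 ∈ G_2 and set g = g_1 g_2. Then the subgroup H of G generated by G_1 and g⁻¹G_2g is the free product G_1 * (G_2)^g and is a proper subgroup of G of infinite index. -/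
open Monoid

namespace Stmt5Aux

universe u v

variable (G₁ : Type u) (G₂ : Type v) [Group G₁] [Group G₂]

abbrev Fam : Bool → Type (max u v) := fun b => cond b (ULift.{v} G₁) (ULift.{u} G₂)

instance : ∀ b, Group (Fam G₁ G₂ b) := fun b => by cases b <;> dsimp [Fam] <;> infer_instance

noncomputable instance : ∀ b, DecidableEq (Fam G₁ G₂ b) := fun _ => Classical.decEq _

/-- `G₁ →* Fam true` -/
def upl : G₁ →* Fam G₁ G₂ true := (MulEquiv.ulift (α := G₁)).symm.toMonoidHom

def upr : G₂ →* Fam G₁ G₂ false := (MulEquiv.ulift (α := G₂)).symm.toMonoidHom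

def eTo : Coprod G₁ G₂ →* CoprodI (Fam G₁ G₂) :=
  Coprod.lift ((CoprodI.of (M := Fam G₁ G₂) (i := true)).comp (upl G₁ G₂))
    ((CoprodI.of (M := Fam G₁ G₂) (i := false)).comp (upr G₁ G₂))

def eFrom : CoprodI (Fam G₁ G₂) →* Coprod G₁ G₂ :=
  CoprodI.lift (fun b => Bool.rec (motive := fun b => Fam G₁ G₂ b →* Coprod G₁ G₂)
    ((Coprod.inr (M := G₁)).comp (MulEquiv.ulift.toMonoidHom))
    ((Coprod.inl (N := G₂)).comp (MulEquiv.ulift.toMonoidHom)) b)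

variable {G₁ G₂}

@[simp] lemma eTo_inl (a : G₁) :
    eTo G₁ G₂ (Coprod.inl a) = CoprodI.of (M := Fam G₁ G₂) (i := true) (ULift.up a) :=
  Coprod.lift_apply_inl ..

@[simp] lemma eTo_inr (y : G₂) :
    eTo G₁ G₂ (Coprod.inr y) = CoprodI.of (M := Fam G₁ G₂) (i := false) (ULift.up y) :=
  Coprod.lift_apply_inr ..

@[simp] lemma eFrom_of_true (a : Fam G₁ G₂ true) :
    eFrom G₁ G₂ (CoprodI.of a) = Coprod.inl a.down :=
  CoprodI.lift_of ..

@[simp] lemma eFrom_of_false (y : Fam G₁ G₂ false) :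
    eFrom G₁ G₂ (CoprodI.of y) = Coprod.inr y.down :=
  CoprodI.lift_of ..

lemma eFrom_eTo (x : Coprod G₁ G₂) : eFrom G₁ G₂ (eTo G₁ G₂ x) = x := by
  have : (eFrom G₁ G₂).comp (eTo G₁ G₂) = MonoidHom.id _ := by
    apply Coprod.hom_ext <;> ext x <;> simp
    · exact eFrom_of_true ⟨x⟩
    · exact eFrom_of_false ⟨x⟩
  exact DFunLike.congr_fun this x

end Stmt5Aux

namespace Stmt5Aux

open Monoid.CoprodI

lemma coprodI_prepend {ι : Type*} {M : ι → Type*} [DecidableEq ι] [∀ i, Monoid (M i)] [∀ i, DecidableEq (M i)]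
    {i : ι} {m : M i} (hm : m ≠ 1) (x : CoprodI M)
    (hx : (Word.equiv x).fstIdx ≠ some i) :
    (Word.equiv (CoprodI.of m * x)).toList = ⟨i, m⟩ :: (Word.equiv x).toList := by
  have e1 : ∀ y : CoprodI M, Word.equiv y = y • Word.empty := fun _ => rfl
  have h1 : Word.equiv (CoprodI.of m * x) = Word.cons m (Word.equiv x) hx hm := by
    rw [Word.cons_eq_smul, e1, e1, mul_smul]
  rw [h1]
  rfl

end Stmt5Aux

namespace Stmt5Aux

open Monoid.CoprodI

variable {G₁ : Type u} {G₂ : Type v} [Group G₁] [Group G₂]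

/-- the normal-form word (as a list of letters) of an element of the coproduct -/
noncomputable def wl (t : Coprod G₁ G₂) : List (Σ b, Fam G₁ G₂ b) :=
  (Word.equiv (eTo G₁ G₂ t)).toList

lemma fstIdx_eq (t : Coprod G₁ G₂) :
    (Word.equiv (eTo G₁ G₂ t)).fstIdx = (wl t).head?.map Sigma.fst := rfl

lemma wl_one : wl (1 : Coprod G₁ G₂) = [] := by
  have : Word.equiv (eTo G₁ G₂ 1) = (1 : CoprodI (Fam G₁ G₂)) • Word.empty := by
    rw [map_one]; rfl
  rw [wl, this, one_smul]
  rfl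

lemma eq_one_of_wl {t : Coprod G₁ G₂} (h : wl t = []) : t = 1 := by
  have hw : Word.equiv (eTo G₁ G₂ t) = Word.empty := Word.ext h
  have : eTo G₁ G₂ t = 1 := by
    have := congrArg (Word.equiv (M := Fam G₁ G₂)).symm hw
    rwa [Equiv.symm_apply_apply] at this
  have h2 := congrArg (eFrom G₁ G₂) this
  rwa [eFrom_eTo, map_one] at h2

lemma wl_inl_mul {a : G₁} (ha : a ≠ 1) {t : Coprod G₁ G₂}
    (ht : (wl t).head?.map Sigma.fst ≠ some true) :
    wl (Coprod.inl a * t) = ⟨true, ULift.up a⟩ :: wl t := by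
  have ha' : (ULift.up a : Fam G₁ G₂ true) ≠ 1 := by
    simp [ULift.ext_iff] at *; exact ha
  have := coprodI_prepend (x := eTo G₁ G₂ t) ha' (by rw [fstIdx_eq]; exact ht)
  rw [wl, map_mul, eTo_inl]
  exact this

lemma wl_inr_mul {y : G₂} (hy : y ≠ 1) {t : Coprod G₁ G₂}
    (ht : (wl t).head?.map Sigma.fst ≠ some false) :
    wl (Coprod.inr y * t) = ⟨false, ULift.up y⟩ :: wl t := by
  have hy' : (ULift.up y : Fam G₁ G₂ false) ≠ 1 := by
    simp [ULift.ext_iff] at *; exact hy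
  have := coprodI_prepend (x := eTo G₁ G₂ t) hy' (by rw [fstIdx_eq]; exact ht)
  rw [wl, map_mul, eTo_inr]
  exact this

end Stmt5Aux

namespace Stmt5Aux

open Monoid.CoprodI

variable {G₁ : Type u} {G₂ : Type v} [Group G₁] [Group G₂]

variable (g₁ : G₁) (g₂ : G₂)

def φA : G₂ →* Coprod G₁ G₂ :=
  ((MulAut.conj (Coprod.inl g₁ * Coprod.inr g₂))⁻¹).toMonoidHom.comp Coprod.inr

def fA : Coprod G₁ G₂ →* Coprod G₁ G₂ := Coprod.lift Coprod.inl (φA g₁ g₂)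

lemma φA_apply (y : G₂) :
    φA g₁ g₂ y = Coprod.inr g₂⁻¹ * (Coprod.inl g₁⁻¹ * (Coprod.inr y *
      (Coprod.inl g₁ * Coprod.inr g₂))) := by
  simp [φA, MulAut.conj_inv_apply, mul_assoc]

variable {g₁ g₂}

lemma wl_φA_mul (hg₁ : g₁ ≠ 1) (hg₂ : g₂ ≠ 1) {y : G₂} (hy : y ≠ 1) {t : Coprod G₁ G₂}
    (ht : (wl t).head?.map Sigma.fst ≠ some false) :
    wl (φA g₁ g₂ y * t) =
      ⟨false, ULift.up g₂⁻¹⟩ :: ⟨true, ULift.up g₁⁻¹⟩ :: ⟨false, ULift.up y⟩ ::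
        ⟨true, ULift.up g₁⟩ :: ⟨false, ULift.up g₂⟩ :: wl t := by
  have key : φA g₁ g₂ y * t = Coprod.inr g₂⁻¹ * (Coprod.inl g₁⁻¹ * (Coprod.inr y *
      (Coprod.inl g₁ * (Coprod.inr g₂ * t)))) := by
    rw [φA_apply]; group
  have h5 := wl_inr_mul (G₁ := G₁) hg₂ ht
  have h4 := wl_inl_mul hg₁ (t := Coprod.inr g₂ * t) (by rw [h5]; simp)
  have h3 := wl_inr_mul hy (t := Coprod.inl g₁ * (Coprod.inr g₂ * t)) (by rw [h4]; simp)
  have h2 := wl_inl_mul (inv_ne_one.mpr hg₁)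
    (t := Coprod.inr y * (Coprod.inl g₁ * (Coprod.inr g₂ * t))) (by rw [h3]; simp)
  have h1 := wl_inr_mul (inv_ne_one.mpr hg₂)
    (t := Coprod.inl g₁⁻¹ * (Coprod.inr y * (Coprod.inl g₁ * (Coprod.inr g₂ * t))))
    (by rw [h2]; simp)
  rw [key, h1, h2, h3, h4, h5]

end Stmt5Aux

namespace Stmt5Aux

open Monoid.CoprodI

variable {G₁ : Type u} {G₂ : Type v} [Group G₁] [Group G₂]

def Pf (g₁ : G₁) (g₂ : G₂) (t : Coprod G₁ G₂) : Prop :=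
  ∃ y : G₂, y ≠ 1 ∧ ∃ rest, wl t =
    ⟨false, ULift.up g₂⁻¹⟩ :: ⟨true, ULift.up g₁⁻¹⟩ :: ⟨false, ULift.up y⟩ ::
      ⟨true, ULift.up g₁⟩ :: ⟨false, ULift.up g₂⟩ :: rest

def Pt (g₁ : G₁) (g₂ : G₂) (t : Coprod G₁ G₂) : Prop :=
  ∃ a : G₁, a ≠ 1 ∧ ∃ t', (t' = 1 ∨ Pf g₁ g₂ t') ∧ t = Coprod.inl a * t' ∧
    wl t = ⟨true, ULift.up a⟩ :: wl t'

variable {g₁ : G₁} {g₂ : G₂}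

lemma Pf.head {t : Coprod G₁ G₂} (h : Pf g₁ g₂ t) :
    (wl t).head?.map Sigma.fst = some false := by
  obtain ⟨y, -, rest, hw⟩ := h; rw [hw]; rfl

lemma Pt.head {t : Coprod G₁ G₂} (h : Pt g₁ g₂ t) :
    (wl t).head?.map Sigma.fst = some true := by
  obtain ⟨a, -, t', -, -, hw⟩ := h; rw [hw]; rfl

lemma Pf.ne_one {t : Coprod G₁ G₂} (h : Pf g₁ g₂ t) : t ≠ 1 := by
  intro rfl'
  obtain ⟨y, -, rest, hw⟩ := h
  rw [rfl', wl_one] at hw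
  exact List.cons_ne_nil _ _ hw.symm

lemma Pt.ne_one {t : Coprod G₁ G₂} (h : Pt g₁ g₂ t) : t ≠ 1 := by
  intro rfl'
  obtain ⟨a, -, t', -, -, hw⟩ := h
  rw [rfl', wl_one] at hw
  exact List.cons_ne_nil _ _ hw.symm

/-- letter to element -/
def dd (p : Σ b, Fam G₁ G₂ b) : Coprod G₁ G₂ := eFrom G₁ G₂ (CoprodI.of p.2)

lemma master_list (hg₁ : g₁ ≠ 1) (hg₂ : g₂ ≠ 1) :
    ∀ l : List (Σ b, Fam G₁ G₂ b), (∀ p ∈ l, p.2 ≠ 1) →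
      l.Chain' (fun p q => p.1 ≠ q.1) →
      (l.head?.map Sigma.fst = some true → Pt g₁ g₂ (fA g₁ g₂ (l.map dd).prod)) ∧
      (l.head?.map Sigma.fst = some false → Pf g₁ g₂ (fA g₁ g₂ (l.map dd).prod)) := by
  intro l
  induction l with
  | nil => intro _ _; exact ⟨fun h => by simp at h, fun h => by simp at h⟩
  | cons p l' ih =>
    intro hne hch
    obtain ⟨hch1, hch2⟩ := List.isChain_cons.mp hch
    have ihm := ih (fun q hq => hne q (List.mem_cons_of_mem _ hq)) hch2
    have hx1 : p.2 ≠ 1 := hne p List.mem_cons_self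
    obtain ⟨b, x⟩ := p
    have hone : fA g₁ g₂ (([] : List (Σ b, Fam G₁ G₂ b)).map dd).prod = 1 := by simp
    have hprod : fA g₁ g₂ (((⟨b, x⟩ : Σ b, Fam G₁ G₂ b) :: l').map dd).prod
        = fA g₁ g₂ (dd ⟨b, x⟩) * fA g₁ g₂ (l'.map dd).prod := by
      rw [List.map_cons, List.prod_cons, map_mul]
    have hstruct : (fA g₁ g₂ (l'.map dd).prod = 1 ∧
          (wl (fA g₁ g₂ (l'.map dd).prod)).head?.map Sigma.fst = none) ∨
        ((l'.head?.map Sigma.fst = some true ∧ Pt g₁ g₂ (fA g₁ g₂ (l'.map dd).prod)) ∨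
         (l'.head?.map Sigma.fst = some false ∧ Pf g₁ g₂ (fA g₁ g₂ (l'.map dd).prod))) := by
      cases l' with
      | nil =>
        left
        rw [hone, wl_one]
        exact ⟨rfl, rfl⟩
      | cons q l'' =>
        right
        cases hq : q.1 with
        | true => left; exact ⟨by simp [hq], ihm.1 (by simp [hq])⟩
        | false => right; exact ⟨by simp [hq], ihm.2 (by simp [hq])⟩
    have hqne : ∀ z ∈ l'.head?.map Sigma.fst, b ≠ z := by
      intro z hz
      cases hl' : l'.head? with
      | none => rw [hl'] at hz; simp at hz
      | some q =>
        rw [hl'] at hz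
        simp only [Option.map_some, Option.mem_def, Option.some.injEq] at hz
        exact hz ▸ hch1 q (by rw [hl']; rfl)
    cases b with
    | true =>
      refine ⟨fun _ => ?_, fun h => by simp at h⟩
      have hx : x.down ≠ 1 := fun h => hx1 (ULift.ext _ _ h)
      have hfdd : fA g₁ g₂ (dd ⟨true, x⟩) = Coprod.inl x.down := by
        rw [dd, eFrom_of_true, fA, Coprod.lift_apply_inl]
      have hhead : (wl (fA g₁ g₂ (l'.map dd).prod)).head?.map Sigma.fst ≠ some true := by
        rcases hstruct with ⟨-, h0⟩ | ⟨hidx, -⟩ | ⟨-, h1⟩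
        · rw [h0]; simp
        · exact absurd rfl (hqne true (by rw [hidx]; rfl))
        · rw [Pf.head h1]; simp
      have hPforone : fA g₁ g₂ (l'.map dd).prod = 1 ∨ Pf g₁ g₂ (fA g₁ g₂ (l'.map dd).prod) := by
        rcases hstruct with ⟨h0, -⟩ | ⟨hidx, -⟩ | ⟨-, h1⟩
        · exact Or.inl h0
        · exact absurd rfl (hqne true (by rw [hidx]; rfl))
        · exact Or.inr h1
      refine ⟨x.down, hx, fA g₁ g₂ (l'.map dd).prod, hPforone, ?_, ?_⟩
      · rw [hprod, hfdd]
      · rw [hprod, hfdd, wl_inl_mul hx hhead]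
    | false =>
      refine ⟨fun h => by simp at h, fun _ => ?_⟩
      have hx : x.down ≠ 1 := fun h => hx1 (ULift.ext _ _ h)
      have hfdd : fA g₁ g₂ (dd ⟨false, x⟩) = φA g₁ g₂ x.down := by
        rw [dd, eFrom_of_false, fA, Coprod.lift_apply_inr]
      have hhead : (wl (fA g₁ g₂ (l'.map dd).prod)).head?.map Sigma.fst ≠ some false := by
        rcases hstruct with ⟨-, h0⟩ | ⟨-, h1⟩ | ⟨hidx, -⟩
        · rw [h0]; simp
        · rw [Pt.head h1]; simp
        · exact absurd rfl (hqne false (by rw [hidx]; rfl))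
      refine ⟨x.down, hx, wl (fA g₁ g₂ (l'.map dd).prod), ?_⟩
      rw [hprod, hfdd, wl_φA_mul hg₁ hg₂ hx hhead]


lemma master (hg₁ : g₁ ≠ 1) (hg₂ : g₂ ≠ 1) {w : Coprod G₁ G₂} (hw : w ≠ 1) :
    Pt g₁ g₂ (fA g₁ g₂ w) ∨ Pf g₁ g₂ (fA g₁ g₂ w) := by
  have hsymm : ∀ W : Word (Fam G₁ G₂), (Word.equiv (M := Fam G₁ G₂)).symm W = Word.prod W :=
    fun _ => rfl
  have hrec : ((wl w).map dd).prod = w := by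
    have h1 : Word.prod (Word.equiv (eTo G₁ G₂ w)) = eTo G₁ G₂ w := by
      rw [← hsymm, Equiv.symm_apply_apply]
    have h3 : ((wl w).map dd).prod = eFrom G₁ G₂ (Word.prod (Word.equiv (eTo G₁ G₂ w))) := by
      rw [Word.prod, map_list_prod, List.map_map]
      rfl
    rw [h3, h1]
    exact eFrom_eTo w
  have hne : ∀ p ∈ wl w, p.2 ≠ 1 := fun p hp => (Word.equiv (eTo G₁ G₂ w)).ne_one p hp
  have hch : (wl w).Chain' (fun p q => p.1 ≠ q.1) := (Word.equiv (eTo G₁ G₂ w)).chain_ne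
  have hml := master_list hg₁ hg₂ (wl w) hne hch
  rw [hrec] at hml
  cases hl : (wl w) with
  | nil => exact absurd (eq_one_of_wl hl) hw
  | cons p rest =>
    cases hp : p.1 with
    | true => exact Or.inl (hml.1 (by rw [hl]; simp [hp]))
    | false => exact Or.inr (hml.2 (by rw [hl]; simp [hp]))

lemma fA_injective (hg₁ : g₁ ≠ 1) (hg₂ : g₂ ≠ 1) : Function.Injective (fA g₁ g₂) := by
  rw [injective_iff_map_eq_one]
  intro w hw1
  by_contra hw
  rcases master hg₁ hg₂ hw with h | h
  · exact (Pt.ne_one h) hw1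
  · exact (Pf.ne_one h) hw1

lemma wl_inr (hg₂ : g₂ ≠ 1) : wl (Coprod.inr g₂ : Coprod G₁ G₂) = [⟨false, ULift.up g₂⟩] := by
  have := wl_inr_mul (G₁ := G₁) hg₂ (t := 1) (by rw [wl_one]; simp)
  rw [mul_one] at this
  rw [this, wl_one]

lemma inr_not_mem (hg₁ : g₁ ≠ 1) (hg₂ : g₂ ≠ 1) :
    Coprod.inr g₂ ∉ (fA g₁ g₂).range := by
  rintro ⟨w, hw⟩
  have hwl := wl_inr (G₁ := G₁) hg₂
  have hne : (Coprod.inr g₂ : Coprod G₁ G₂) ≠ 1 := by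
    intro h; rw [h, wl_one] at hwl; exact List.cons_ne_nil _ _ hwl.symm
  have hwne : w ≠ 1 := by rintro rfl; rw [map_one] at hw; exact hne hw.symm
  rcases master hg₁ hg₂ hwne with h | h
  · have := Pt.head h
    rw [hw, hwl] at this
    simp at this
  · obtain ⟨y, -, rest, h5⟩ := h
    rw [hw, hwl] at h5
    simp at h5

def alt2 (p q : Σ b, Fam G₁ G₂ b) : ℕ → List (Σ b, Fam G₁ G₂ b)
  | 0 => []
  | (k+1) => p :: q :: alt2 p q k

lemma wl_pow_TF {u : G₁} (hu : u ≠ 1) (hg₂' : g₂ ≠ 1) (k : ℕ) :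
    wl ((Coprod.inl u * Coprod.inr g₂) ^ k) =
      alt2 ⟨true, ULift.up u⟩ ⟨false, ULift.up g₂⟩ k := by
  induction k with
  | zero => rw [pow_zero, wl_one]; rfl
  | succ k ihk =>
    have hsplit : (Coprod.inl u * Coprod.inr g₂) ^ (k+1)
        = Coprod.inl u * (Coprod.inr g₂ * (Coprod.inl u * Coprod.inr g₂) ^ k) := by
      rw [pow_succ', mul_assoc]
    have hh1 : (wl ((Coprod.inl u * Coprod.inr g₂) ^ k)).head?.map Sigma.fst ≠ some false := by
      rw [ihk]; cases k <;> simp [alt2]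
    have h2 := wl_inr_mul hg₂' hh1
    have h1 := wl_inl_mul hu (t := Coprod.inr g₂ * (Coprod.inl u * Coprod.inr g₂) ^ k)
      (by rw [h2]; simp)
    rw [hsplit, h1, h2, ihk]
    rfl

lemma wl_pow_FT {z : G₂} (hz : z ≠ 1) (hg₁' : g₁ ≠ 1) (k : ℕ) :
    wl ((Coprod.inr z * Coprod.inl g₁) ^ k) =
      alt2 ⟨false, ULift.up z⟩ ⟨true, ULift.up g₁⟩ k := by
  induction k with
  | zero => rw [pow_zero, wl_one]; rfl
  | succ k ihk =>
    have hsplit : (Coprod.inr z * Coprod.inl g₁) ^ (k+1)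
        = Coprod.inr z * (Coprod.inl g₁ * (Coprod.inr z * Coprod.inl g₁) ^ k) := by
      rw [pow_succ', mul_assoc]
    have hh1 : (wl ((Coprod.inr z * Coprod.inl g₁) ^ k)).head?.map Sigma.fst ≠ some true := by
      rw [ihk]; cases k <;> simp [alt2]
    have h2 := wl_inl_mul hg₁' hh1
    have h1 := wl_inr_mul hz (t := Coprod.inl g₁ * (Coprod.inr z * Coprod.inl g₁) ^ k)
      (by rw [h2]; simp)
    rw [hsplit, h1, h2, ihk]
    rfl

lemma pow_TF_not_mem (hg₁ : g₁ ≠ 1) (hg₂ : g₂ ≠ 1) {u : G₁} (hu : u ≠ 1) (hu' : u ≠ g₁⁻¹)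
    {k : ℕ} (hk : k ≠ 0) :
    (Coprod.inl u * Coprod.inr g₂) ^ k ∉ (fA g₁ g₂).range := by
  obtain ⟨j, rfl⟩ : ∃ j, k = j + 1 :=
    ⟨k - 1, (Nat.succ_pred_eq_of_pos (Nat.pos_of_ne_zero hk)).symm⟩
  rintro ⟨w, hw⟩
  have hwl := wl_pow_TF (g₂ := g₂) hu hg₂ (j+1)
  rw [show alt2 (⟨true, ULift.up u⟩ : Σ b, Fam G₁ G₂ b) ⟨false, ULift.up g₂⟩ (j+1)
      = ⟨true, ULift.up u⟩ :: ⟨false, ULift.up g₂⟩ ::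
        alt2 ⟨true, ULift.up u⟩ ⟨false, ULift.up g₂⟩ j from rfl] at hwl
  have hne : (Coprod.inl u * Coprod.inr g₂) ^ (j+1) ≠ 1 := by
    intro h; rw [h, wl_one] at hwl; exact List.cons_ne_nil _ _ hwl.symm
  have hwne : w ≠ 1 := by rintro rfl; rw [map_one] at hw; exact hne hw.symm
  rcases master hg₁ hg₂ hwne with h | h
  · obtain ⟨a, ha, t', ht'or, -, hW⟩ := h
    rw [hw, hwl] at hW
    rw [List.cons.injEq] at hW
    have htail := hW.2
    rcases ht'or with rfl | hPf
    · rw [wl_one] at htail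
      exact List.cons_ne_nil _ _ htail
    · obtain ⟨y, -, rest, h5⟩ := hPf
      rw [h5] at htail
      cases j with
      | zero => simp [alt2] at htail
      | succ j' =>
        rw [show alt2 (⟨true, ULift.up u⟩ : Σ b, Fam G₁ G₂ b) ⟨false, ULift.up g₂⟩ (j'+1)
            = ⟨true, ULift.up u⟩ :: ⟨false, ULift.up g₂⟩ ::
              alt2 ⟨true, ULift.up u⟩ ⟨false, ULift.up g₂⟩ j' from rfl,
          List.cons.injEq, List.cons.injEq] at htail
        have h6 := htail.2.1
        injection h6 with h7 h8
        exact hu' (congrArg ULift.down h8)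
  · obtain ⟨y, -, rest, h5⟩ := h
    rw [hw, hwl] at h5
    simp at h5

lemma pow_FT_not_mem (hg₁ : g₁ ≠ 1) (hg₂ : g₂ ≠ 1) {z : G₂} (hz : z ≠ 1) (hz' : z ≠ g₂⁻¹)
    {k : ℕ} (hk : k ≠ 0) :
    (Coprod.inr z * Coprod.inl g₁) ^ k ∉ (fA g₁ g₂).range := by
  obtain ⟨j, rfl⟩ : ∃ j, k = j + 1 :=
    ⟨k - 1, (Nat.succ_pred_eq_of_pos (Nat.pos_of_ne_zero hk)).symm⟩
  rintro ⟨w, hw⟩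
  have hwl := wl_pow_FT (g₁ := g₁) hz hg₁ (j+1)
  rw [show alt2 (⟨false, ULift.up z⟩ : Σ b, Fam G₁ G₂ b) ⟨true, ULift.up g₁⟩ (j+1)
      = ⟨false, ULift.up z⟩ :: ⟨true, ULift.up g₁⟩ ::
        alt2 ⟨false, ULift.up z⟩ ⟨true, ULift.up g₁⟩ j from rfl] at hwl
  have hne : (Coprod.inr z * Coprod.inl g₁) ^ (j+1) ≠ 1 := by
    intro h; rw [h, wl_one] at hwl; exact List.cons_ne_nil _ _ hwl.symm
  have hwne : w ≠ 1 := by rintro rfl; rw [map_one] at hw; exact hne hw.symm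
  rcases master hg₁ hg₂ hwne with h | h
  · have := Pt.head h
    rw [hw, hwl] at this
    simp at this
  · obtain ⟨y, -, rest, h5⟩ := h
    rw [hw, hwl] at h5
    rw [List.cons.injEq] at h5
    have h6 := h5.1
    injection h6 with h7 h8
    exact hz' (congrArg ULift.down h8)


lemma exists_third {G : Type*} [Group G] [Finite G] (h3 : 3 ≤ Nat.card G) (v : G) :
    ∃ u : G, u ≠ 1 ∧ u ≠ v := by
  by_contra hc
  push_neg at hc
  have := Fintype.ofFinite G
  letI := Classical.decEq G
  rw [Nat.card_eq_fintype_card] at h3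
  have hsub : (Finset.univ : Finset G) ⊆ {1, v} := by
    intro x _
    rcases eq_or_ne x 1 with rfl | hx
    · simp
    · simp [hc x hx]
  have h2 := Finset.card_le_card hsub
  have h4 : ({1, v} : Finset G).card ≤ 2 :=
    (Finset.card_insert_le _ _).trans (by simp)
  rw [Finset.card_univ] at h2
  omega

lemma index_eq_zero_of_pow_not_mem {G : Type*} [Group G] {H : Subgroup G} {r : G}
    (h : ∀ k : ℕ, k ≠ 0 → r ^ k ∉ H) : H.index = 0 := by
  have hinj : Function.Injective (fun n : ℕ => ((QuotientGroup.mk ((r ^ n)⁻¹)) : G ⧸ H)) := by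
    intro n m hnm
    simp only at hnm
    rw [QuotientGroup.eq] at hnm
    by_contra hne
    have hnm' : r ^ n * (r ^ m)⁻¹ ∈ H := by rwa [inv_inv] at hnm
    have key : ∀ a b : ℕ, b < a → r ^ a * (r ^ b)⁻¹ ∈ H → False := by
      intro a b hab hmem
      have hd : r ^ a * (r ^ b)⁻¹ = r ^ (a - b) := by
        rw [show a = (a - b) + b by omega, pow_add, mul_inv_cancel_right]
        congr 1
        omega
      rw [hd] at hmem
      exact h (a - b) (by omega) hmem
    rcases Nat.lt_trichotomy n m with hlt | heq | hgt
    · exact key m n hlt (by simpa using H.inv_mem hnm')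
    · exact hne heq
    · exact key n m hgt hnm'
  have : Infinite (G ⧸ H) := Infinite.of_injective _ hinj
  rw [Subgroup.index_eq_card]
  exact Nat.card_eq_zero_of_infinite

end Stmt5Aux


/-- Let `G = G₁ * G₂` be the free product of two nontrivial finite groups
with `|G₁| + |G₂| > 4`; pick `g₁ ≠ 1` in `G₁`, `g₂ ≠ 1` in `G₂` and set `g = g₁ g₂`.
Then the subgroup `H` generated by `G₁` and `g⁻¹ G₂ g` is the free product
`G₁ * (G₂)^g` (i.e. the canonical map from the free product to `G` is injective with
image `H`) and `H` is a proper subgroup of `G` of infinite index. -/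
theorem stmt_5 (G₁ G₂ : Type*) [Group G₁] [Group G₂] [Finite G₁] [Finite G₂]
    [Nontrivial G₁] [Nontrivial G₂] (hcard : 4 < Nat.card G₁ + Nat.card G₂)
    (g₁ : G₁) (hg₁ : g₁ ≠ 1) (g₂ : G₂) (hg₂ : g₂ ≠ 1) :
    let g : Coprod G₁ G₂ := Coprod.inl g₁ * Coprod.inr g₂
    let φ : G₂ →* Coprod G₁ G₂ := ((MulAut.conj g)⁻¹).toMonoidHom.comp Coprod.inr
    let f : Coprod G₁ G₂ →* Coprod G₁ G₂ := Coprod.lift Coprod.inl φ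
    let H : Subgroup (Coprod G₁ G₂) :=
      (Coprod.inl : G₁ →* Coprod G₁ G₂).range ⊔ φ.range
    Function.Injective f ∧ f.range = H ∧ H ≠ ⊤ ∧ H.index = 0 := by
  intro g φ f H
  have hφ : φ = Stmt5Aux.φA g₁ g₂ := rfl
  have hf : f = Stmt5Aux.fA g₁ g₂ := rfl
  have hr : (Stmt5Aux.fA g₁ g₂).range = H := Coprod.range_lift _ _
  refine ⟨?_, ?_, ?_, ?_⟩
  · rw [hf]
    exact Stmt5Aux.fA_injective hg₁ hg₂
  · rw [hf]
    exact hr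
  · intro htop
    have hmem : Coprod.inr g₂ ∈ H := htop ▸ Subgroup.mem_top _
    have hmem' : Coprod.inr g₂ ∈ (Stmt5Aux.fA g₁ g₂).range := by rw [hr]; exact hmem
    exact Stmt5Aux.inr_not_mem hg₁ hg₂ hmem'
  · rw [← hr]
    have h1 : 1 < Nat.card G₁ := Finite.one_lt_card
    have h2 : 1 < Nat.card G₂ := Finite.one_lt_card
    rcases le_or_gt (Nat.card G₁) 2 with hle | hlt
    · obtain ⟨z, hz1, hz2⟩ := Stmt5Aux.exists_third (G := G₂) (by omega) (g₂⁻¹)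
      exact Stmt5Aux.index_eq_zero_of_pow_not_mem (r := Coprod.inr z * Coprod.inl g₁)
        (fun k hk => Stmt5Aux.pow_FT_not_mem hg₁ hg₂ hz1 hz2 hk)
    · obtain ⟨u, hu1, hu2⟩ := Stmt5Aux.exists_third (G := G₁) (by omega) (g₁⁻¹)
      exact Stmt5Aux.index_eq_zero_of_pow_not_mem (r := Coprod.inl u * Coprod.inr g₂)
        (fun k hk => Stmt5Aux.pow_TF_not_mem hg₁ hg₂ hu1 hu2 hk)
end

section
/- A torsion-free pro-p group that contains an open (finite-index) procyclic subgroup is itself procyclic (isomorphic to Z_p or trivial). -/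
open Filter Topology Pointwise
set_option linter.unusedSectionVars false


/-- A topological group is procyclic if it is topologically generated by one element. -/
def IsProcyclic (G : Type*) [Group G] [TopologicalSpace G] : Prop :=
  ∃ g : G, Dense ((Subgroup.zpowers g : Subgroup G) : Set G)

/-- A (profinite) topological group is pro-`p` if every open subgroup has `p`-power
index. -/
def IsProP (p : ℕ) (G : Type*) [Group G] [TopologicalSpace G] : Prop :=
  ∀ U : Subgroup G, IsOpen (U : Set G) → ∃ k : ℕ, U.index = p ^ k

section Aux

variable {p : ℕ} [Fact p.Prime] {G : Type*} [Group G] [TopologicalSpace G]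
  [IsTopologicalGroup G] [CompactSpace G] [TotallyDisconnectedSpace G] [T2Space G]

/-- K1: every neighborhood of 1 contains an open subgroup. -/
theorem aux_nhd_sub {W : Set G} (hW : W ∈ 𝓝 (1 : G)) :
    ∃ U : Subgroup G, IsOpen (U : Set G) ∧ (U : Set G) ⊆ W := by
  obtain ⟨V, ⟨h1V, hVclopen⟩, hVW⟩ := (nhds_basis_clopen (1 : G)).mem_iff.mp hW
  obtain ⟨U, hU⟩ := IsTopologicalGroup.exist_openSubgroup_sub_clopen_nhds_of_one hVclopen h1V
  exact ⟨U.toSubgroup, U.isOpen, hU.trans hVW⟩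

/-- K2: for every open subgroup `U` there is `j` with `g ^ a ∈ U` whenever `p ^ j ∣ a`. -/
theorem aux_pow_mem (hGp : IsProP p G) (U : Subgroup G) (hU : IsOpen (U : Set G)) :
    ∃ j : ℕ, ∀ (g : G) (a : ℤ), ((p : ℤ) ^ j ∣ a) → g ^ a ∈ U := by
  haveI : Finite (G ⧸ U) := Subgroup.quotient_finite_of_isOpen U hU
  haveI : U.FiniteIndex := U.finiteIndex_of_finite_quotient
  haveI : U.normalCore.FiniteIndex := U.finiteIndex_normalCore
  have hCclosed : IsClosed ((U.normalCore : Subgroup G) : Set G) :=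
    Subgroup.normalCore_isClosed U (U.isClosed_of_isOpen hU)
  have hCopen : IsOpen ((U.normalCore : Subgroup G) : Set G) :=
    Subgroup.isOpen_of_isClosed_of_finiteIndex _ hCclosed
  obtain ⟨j, hj⟩ := hGp U.normalCore hCopen
  refine ⟨j, fun g a ⟨b, hb⟩ => ?_⟩
  have h1 : g ^ (U.normalCore.index : ℤ) ∈ U.normalCore := by
    rw [zpow_natCast]; exact U.normalCore.pow_index_mem g
  have : g ^ a = (g ^ ((p : ℤ) ^ j)) ^ b := by rw [← zpow_mul, ← hb]
  rw [this]
  have h2 : g ^ ((p : ℤ) ^ j) ∈ U.normalCore := by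
    have := h1
    rw [hj] at this
    exact_mod_cast this
  exact U.normalCore_le (U.normalCore.zpow_mem h2 b)

/-- Sequences eventually in every open subgroup tend to 1. -/
theorem aux_tendsto_one (t : ℕ → G)
    (h : ∀ U : Subgroup G, IsOpen (U : Set G) → ∀ᶠ n in atTop, t n ∈ U) :
    Tendsto t atTop (𝓝 (1 : G)) := by
  intro W hW
  obtain ⟨U, hUopen, hUW⟩ := aux_nhd_sub hW
  exact (h U hUopen).mono fun n hn => hUW hn

/-- A sequence with subgroup-tail-coherence converges. -/
theorem aux_exists_lim (t : ℕ → G)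
    (coh : ∀ U : Subgroup G, IsOpen (U : Set G) → ∃ j, ∀ n, j ≤ n → (t j)⁻¹ * t n ∈ U) :
    ∃ x, Tendsto t atTop (𝓝 x) := by
  obtain ⟨x, hx⟩ := exists_clusterPt_of_compactSpace (Filter.map t atTop)
  refine ⟨x, ?_⟩
  have key : ∀ U : Subgroup G, IsOpen (U : Set G) → ∀ᶠ n in atTop, x⁻¹ * t n ∈ U := by
    intro U hUopen
    obtain ⟨j, hj⟩ := coh U hUopen
    have hclosedU : IsClosed (U : Set G) := U.isClosed_of_isOpen hUopen
    -- the tail is contained in the closed coset t j • U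
    have htail : t '' Set.Ici j ⊆ (t j) • (U : Set G) := by
      rintro _ ⟨n, hn, rfl⟩
      exact ⟨(t j)⁻¹ * t n, hj n hn, by simp [smul_eq_mul, mul_inv_cancel_left]⟩
    have hmem : t '' Set.Ici j ∈ Filter.map t atTop :=
      Filter.image_mem_map (Filter.Ici_mem_atTop j)
    have hx2 : x ∈ closure (t '' Set.Ici j) := by
      have : ClusterPt x (𝓟 (t '' Set.Ici j)) := hx.mono (Filter.le_principal_iff.mpr hmem)
      exact mem_closure_iff_clusterPt.mpr this
    have hx3 : x ∈ (t j) • (U : Set G) := by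
      have : closure (t '' Set.Ici j) ⊆ (t j) • (U : Set G) :=
        closure_minimal htail (hclosedU.smul (t j))
      exact this hx2
    obtain ⟨u, hu, hxu⟩ := hx3
    have hxu' : t j * u = x := by simpa [smul_eq_mul] using hxu
    filter_upwards [Filter.Ici_mem_atTop j] with n hn
    have : x⁻¹ * t n = u⁻¹ * ((t j)⁻¹ * t n) := by
      rw [← hxu']; group
    rw [this]
    exact U.mul_mem (U.inv_mem hu) (hj n hn)
  intro W hW
  have h1 : (fun w => x * w) ⁻¹' W ∈ 𝓝 (1 : G) := by
    have hc : ContinuousAt (fun w => x * w) (1 : G) := (continuous_mul_left x).continuousAt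
    apply hc
    simpa using hW
  obtain ⟨U, hUopen, hUW⟩ := aux_nhd_sub h1
  have := key U hUopen
  rw [Filter.mem_map]
  filter_upwards [this] with n hn
  have : x * (x⁻¹ * t n) ∈ W := hUW hn
  simpa using this


/-- Extensionality from density of `ℤ` in `ℤ_[p]`. -/
theorem aux_ext {f g : ℤ_[p] → G} (hf : Continuous f) (hg : Continuous g)
    (h : ∀ n : ℤ, f (n : ℤ_[p]) = g (n : ℤ_[p])) : f = g := by
  have hclosed : IsClosed {x : ℤ_[p] | f x = g x} := isClosed_eq hf hg
  have hsub : Set.range ((↑) : ℤ → ℤ_[p]) ⊆ {x | f x = g x} := by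
    rintro _ ⟨n, rfl⟩; exact h n
  have hcl : closure (Set.range ((↑) : ℤ → ℤ_[p])) ⊆ {x | f x = g x} :=
    closure_minimal hsub hclosed
  funext x
  exact hcl (PadicInt.denseRange_intCast x)

theorem aux_dvd_int {a : ℤ} {j : ℕ}
    (h : ((a : ℤ_[p]) ∈ Ideal.span {(p : ℤ_[p]) ^ j})) : (p : ℤ) ^ j ∣ a := by
  rw [← PadicInt.norm_le_pow_iff_mem_span_pow] at h
  exact_mod_cast PadicInt.norm_int_le_pow_iff_dvd.mp h

theorem aux_span_mono {j n : ℕ} (h : j ≤ n) :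
    (Ideal.span {(p : ℤ_[p]) ^ n} : Ideal ℤ_[p]) ≤ Ideal.span {(p : ℤ_[p]) ^ j} :=
  Ideal.span_singleton_le_span_singleton.mpr (pow_dvd_pow _ h)

theorem aux_exists_phi (hGp : IsProP p G) (h₀ : G) :
    ∃ φ : ℤ_[p] → G,
      (∀ x y, φ (x + y) = φ x * φ y) ∧
      Continuous φ ∧
      (∀ m : ℤ, φ (m : ℤ_[p]) = h₀ ^ m) ∧
      Set.range φ = closure ((Subgroup.zpowers h₀ : Subgroup G) : Set G) ∧
      (∀ (n : ℤ) (z : ℤ_[p]), φ ((n : ℤ_[p]) * z) = φ z ^ n) ∧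
      (¬IsOfFinOrder h₀ → Function.Injective φ) := by
  classical
  set s : ℤ_[p] → ℕ → G := fun z n => h₀ ^ ((z.appr n : ℤ)) with hs
  have key : ∀ a b : ℤ, (h₀ ^ a)⁻¹ * h₀ ^ b = h₀ ^ (b - a) := by
    intro a b; rw [← zpow_neg, ← zpow_add, neg_add_eq_sub]
  have hlim : ∀ z, ∃ x, Tendsto (s z) atTop (𝓝 x) := by
    intro z
    apply aux_exists_lim
    intro U hUopen
    obtain ⟨j, hj⟩ := aux_pow_mem hGp U hUopen
    refine ⟨j, fun n hn => ?_⟩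
    rw [hs, key]
    refine hj h₀ _ (aux_dvd_int ?_)
    have h1 := aux_span_mono hn (PadicInt.appr_spec n z)
    have h2 := PadicInt.appr_spec j z
    have heq : (((z.appr n : ℤ) - (z.appr j : ℤ) : ℤ) : ℤ_[p]) =
        (z - z.appr j) - (z - z.appr n) := by push_cast; ring
    rw [heq]; exact Ideal.sub_mem _ h2 h1
  choose φ hφ using hlim
  have hratio : ∀ t : ℕ → ℤ, (∀ j : ℕ, ∀ᶠ n in atTop, (p : ℤ) ^ j ∣ t n) →
      Tendsto (fun n => h₀ ^ t n) atTop (𝓝 (1 : G)) := by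
    intro t ht
    apply aux_tendsto_one
    intro U hUopen
    obtain ⟨j, hj⟩ := aux_pow_mem hGp U hUopen
    exact (ht j).mono fun n hn => hj h₀ _ hn
  have hom : ∀ x y, φ (x + y) = φ x * φ y := by
    intro x y
    have h1 : Tendsto (fun n => h₀ ^ ((x.appr n : ℤ)) * h₀ ^ ((y.appr n : ℤ)))
        atTop (𝓝 (φ x * φ y)) := (hφ x).mul (hφ y)
    have hdvd : ∀ j : ℕ, ∀ᶠ n in atTop,
        (p : ℤ) ^ j ∣ (((x + y).appr n : ℤ) - ((x.appr n : ℤ) + (y.appr n : ℤ))) := by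
      intro j
      filter_upwards [Ici_mem_atTop j] with n hn
      refine aux_dvd_int ?_
      have h1 := aux_span_mono hn (PadicInt.appr_spec n x)
      have h2 := aux_span_mono hn (PadicInt.appr_spec n y)
      have h3 := aux_span_mono hn (PadicInt.appr_spec n (x + y))
      have heq : (((((x + y).appr n : ℤ) - ((x.appr n : ℤ) + (y.appr n : ℤ))) : ℤ) : ℤ_[p]) =
          (x - x.appr n) + (y - y.appr n) - ((x + y) - (x + y).appr n) := by push_cast; ring
      rw [heq]
      exact Ideal.sub_mem _ (Ideal.add_mem _ h1 h2) h3
    have h2 : Tendsto (fun n => (h₀ ^ ((x.appr n : ℤ)) * h₀ ^ ((y.appr n : ℤ))) *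
        h₀ ^ ((((x + y).appr n : ℤ)) - ((x.appr n : ℤ) + (y.appr n : ℤ))))
        atTop (𝓝 ((φ x * φ y) * 1)) := h1.mul (hratio _ hdvd)
    have heq : ∀ n, (h₀ ^ ((x.appr n : ℤ)) * h₀ ^ ((y.appr n : ℤ))) *
        h₀ ^ ((((x + y).appr n : ℤ)) - ((x.appr n : ℤ) + (y.appr n : ℤ))) = s (x + y) n := by
      intro n
      simp only [hs, ← zpow_add]
      congr 1
      ring
    have h3 : Tendsto (s (x + y)) atTop (𝓝 ((φ x * φ y) * 1)) := by
      rw [← funext heq]; exact h2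
    have := tendsto_nhds_unique (hφ (x + y)) h3
    simpa using this
  have hint : ∀ m : ℤ, φ (m : ℤ_[p]) = h₀ ^ m := by
    intro m
    have hdvd : ∀ j : ℕ, ∀ᶠ n in atTop, (p : ℤ) ^ j ∣ (((m : ℤ_[p]).appr n : ℤ) - m) := by
      intro j
      filter_upwards [Ici_mem_atTop j] with n hn
      refine aux_dvd_int ?_
      have h1 := aux_span_mono hn (PadicInt.appr_spec n (m : ℤ_[p]))
      have heq : (((((m : ℤ_[p]).appr n : ℤ) - m) : ℤ) : ℤ_[p]) =
          -(((m : ℤ_[p])) - ((m : ℤ_[p]).appr n)) := by push_cast; ring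
      rw [heq]; exact neg_mem h1
    have h2 : Tendsto (fun n => h₀ ^ m * h₀ ^ ((((m : ℤ_[p]).appr n : ℤ)) - m))
        atTop (𝓝 (h₀ ^ m * 1)) := tendsto_const_nhds.mul (hratio _ hdvd)
    have heq : ∀ n, h₀ ^ m * h₀ ^ ((((m : ℤ_[p]).appr n : ℤ)) - m) = s (m : ℤ_[p]) n := by
      intro n
      simp only [hs, ← zpow_add]
      congr 1
      ring
    have h3 : Tendsto (s (m : ℤ_[p])) atTop (𝓝 (h₀ ^ m * 1)) := by
      rw [← funext heq]; exact h2
    have := tendsto_nhds_unique (hφ _) h3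
    simpa using this
  have hUmem : ∀ (U : Subgroup G), IsOpen (U : Set G) → ∀ j : ℕ,
      (∀ (g : G) (a : ℤ), (p : ℤ) ^ j ∣ a → g ^ a ∈ U) →
      ∀ u : ℤ_[p], u ∈ Ideal.span {(p : ℤ_[p]) ^ j} → φ u ∈ U := by
    intro U hU j hj u hu
    have hclosed : IsClosed (U : Set G) := U.isClosed_of_isOpen hU
    refine hclosed.mem_of_tendsto (hφ u) ?_
    filter_upwards [Ici_mem_atTop j] with n hn
    refine hj h₀ _ (aux_dvd_int ?_)
    have h1 := aux_span_mono hn (PadicInt.appr_spec n u)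
    have heq : (((u.appr n : ℤ)) : ℤ_[p]) = u - (u - u.appr n) := by push_cast; ring
    rw [heq]; exact Ideal.sub_mem _ hu h1
  have hppos : (0 : ℝ) < (p : ℝ) := by exact_mod_cast (Fact.out : p.Prime).pos
  have hcont : Continuous φ := by
    rw [continuous_iff_continuousAt]
    intro z W hW
    have h1 : (fun w => φ z * w) ⁻¹' W ∈ 𝓝 (1 : G) := by
      have hc : ContinuousAt (fun w => φ z * w) (1 : G) := (continuous_mul_left (φ z)).continuousAt
      apply hc
      simpa using hW
    obtain ⟨U, hUopen, hUW⟩ := aux_nhd_sub h1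
    obtain ⟨j, hj⟩ := aux_pow_mem hGp U hUopen
    rw [Filter.mem_map]
    have hb : Metric.ball z ((p : ℝ) ^ ((-(j : ℤ)) + 1)) ∈ 𝓝 z :=
      Metric.ball_mem_nhds _ (zpow_pos hppos _)
    filter_upwards [hb] with w hw
    have h2 : w - z ∈ Ideal.span {(p : ℤ_[p]) ^ j} := by
      rw [← PadicInt.norm_le_pow_iff_mem_span_pow, PadicInt.norm_le_pow_iff_norm_lt_pow_add_one]
      rw [Metric.mem_ball, dist_eq_norm] at hw
      exact hw
    have h3 : φ w = φ z * φ (w - z) := by rw [← hom]; congr 1; ring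
    have h4 : φ (w - z) ∈ U := hUmem U hUopen j hj _ h2
    rw [Set.mem_preimage, h3]
    exact hUW h4
  have hrange : Set.range φ = closure ((Subgroup.zpowers h₀ : Subgroup G) : Set G) := by
    apply subset_antisymm
    · rintro _ ⟨z, rfl⟩
      refine mem_closure_of_tendsto (hφ z) ?_
      filter_upwards with n
      exact Subgroup.zpow_mem _ (Subgroup.mem_zpowers h₀) _
    · refine closure_minimal ?_ (isCompact_range hcont).isClosed
      rintro x hx
      obtain ⟨m, rfl⟩ := Subgroup.mem_zpowers_iff.mp hx
      exact ⟨(m : ℤ_[p]), hint m⟩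
  have h0 : φ 0 = 1 := by
    have h := hom 0 0
    rw [add_zero] at h
    exact (left_eq_mul.mp h)
  have hneg : ∀ z, φ (-z) = (φ z)⁻¹ := by
    intro z
    have h := hom z (-z)
    rw [add_neg_cancel, h0] at h
    exact eq_inv_of_mul_eq_one_right h.symm
  have hzsmul : ∀ (n : ℤ) (z : ℤ_[p]), φ ((n : ℤ_[p]) * z) = φ z ^ n := by
    intro n z
    induction n using Int.induction_on with
    | zero => simpa using h0
    | succ k ih =>
      have hc : (((k : ℤ) + 1 : ℤ) : ℤ_[p]) * z = ((k : ℤ) : ℤ_[p]) * z + z := by push_cast; ring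
      rw [hc, hom, ih, zpow_add_one]
    | pred k ih =>
      have hc : ((-(k : ℤ) - 1 : ℤ) : ℤ_[p]) * z = ((-(k : ℤ) : ℤ) : ℤ_[p]) * z + (-z) := by
        push_cast; ring
      rw [hc, hom, ih, hneg, zpow_sub_one]
  refine ⟨φ, hom, hcont, hint, hrange, hzsmul, ?_⟩
  intro hord
  have hker : ∀ z, φ z = 1 → ∀ x, φ (x * z) = 1 := by
    intro z hz x
    have hfun : (fun x : ℤ_[p] => φ (x * z)) = fun _ : ℤ_[p] => (1 : G) := by
      apply aux_ext
      · exact hcont.comp (continuous_id.mul continuous_const)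
      · exact continuous_const
      · intro n
        rw [hzsmul n z, hz, one_zpow]
    exact congrFun hfun x
  have hker0 : ∀ z, z ≠ 0 → φ z ≠ 1 := by
    intro z hz0 hz1
    set v : ℕ := (PadicInt.valuation z) with hv
    have hpv : φ ((p : ℤ_[p]) ^ v) = 1 := by
      have hspec := PadicInt.unitCoeff_spec hz0
      rw [← hv] at hspec
      set u := PadicInt.unitCoeff hz0 with hu
      have huu : ((u⁻¹ : ℤ_[p]ˣ) : ℤ_[p]) * (u : ℤ_[p]) = 1 := by exact_mod_cast u.inv_mul
      have hkey : ((u⁻¹ : ℤ_[p]ˣ) : ℤ_[p]) * z = (p : ℤ_[p]) ^ v := by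
        calc ((u⁻¹ : ℤ_[p]ˣ) : ℤ_[p]) * z
            = ((u⁻¹ : ℤ_[p]ˣ) : ℤ_[p]) * ((u : ℤ_[p]) * (p : ℤ_[p]) ^ v) := by rw [← hspec]
          _ = (((u⁻¹ : ℤ_[p]ˣ) : ℤ_[p]) * (u : ℤ_[p])) * (p : ℤ_[p]) ^ v := by ring
          _ = (p : ℤ_[p]) ^ v := by rw [huu, one_mul]
      rw [← hkey]
      exact hker z hz1 _
    have hfin : ∀ w : ℤ_[p], φ w = h₀ ^ ((w.appr v : ℤ)) := by
      intro w
      have hmem := PadicInt.appr_spec v w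
      obtain ⟨c, hc⟩ := Ideal.mem_span_singleton'.mp hmem
      have : φ w = φ ((w.appr v : ℤ_[p])) * φ (c * ((p : ℤ_[p]) ^ v)) := by
        rw [← hom]
        congr 1
        rw [hc]
        ring
      rw [this, hker _ hpv c, mul_one]
      have : ((w.appr v : ℕ) : ℤ_[p]) = (((w.appr v : ℤ)) : ℤ_[p]) := by push_cast; ring
      rw [this, hint]
    have hsub : Set.range φ ⊆ (fun n : ℕ => h₀ ^ n) '' (Set.Iio (p ^ v)) := by
      rintro _ ⟨w, rfl⟩
      refine ⟨w.appr v, PadicInt.appr_lt w v, ?_⟩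
      rw [hfin w, zpow_natCast]
    have hfinite : (Set.range φ).Finite :=
      Set.Finite.subset ((Set.finite_Iio _).image _) hsub
    have hinf : (Set.range φ).Infinite := by
      have hinj : Function.Injective fun n : ℤ => h₀ ^ n :=
        injective_zpow_iff_not_isOfFinOrder.mpr hord
      have : Set.range (fun n : ℤ => h₀ ^ n) ⊆ Set.range φ := by
        rintro _ ⟨m, rfl⟩
        exact ⟨(m : ℤ_[p]), hint m⟩
      exact ((Set.infinite_range_of_injective hinj).mono this)
    exact hinf hfinite
  intro x y hxy
  have hz : φ (x - y) = 1 := by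
    have h := hom (x - y) y
    rw [sub_add_cancel, hxy] at h
    exact mul_right_cancel (h.symm.trans (one_mul (φ y)).symm)
  by_contra hne
  exact hker0 _ (sub_ne_zero.mpr hne) hz


theorem aux_main (hGp : IsProP p G) (htf : ∀ g : G, g ≠ 1 → ¬IsOfFinOrder g)
    (h₀ : G) (hne : h₀ ≠ 1)
    (hopen : IsOpen (closure ((Subgroup.zpowers h₀ : Subgroup G) : Set G))) :
    ∃ e : G ≃* Multiplicative ℤ_[p], Continuous e := by
  classical
  obtain ⟨φ, hom, hcont, hint, hrange, hzsmul, hinjer⟩ := aux_exists_phi hGp h₀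
  have hord : ¬IsOfFinOrder h₀ := htf h₀ hne
  have hinj : Function.Injective φ := hinjer hord
  have h0 : φ 0 = 1 := by
    have h := hom 0 0
    rw [add_zero] at h
    exact left_eq_mul.mp h
  set Hs : Subgroup G := (Subgroup.zpowers h₀).topologicalClosure with hHs
  have hHscoe : (Hs : Set G) = closure ((Subgroup.zpowers h₀ : Subgroup G) : Set G) := rfl
  have hHsopen : IsOpen (Hs : Set G) := hopen
  haveI : Finite (G ⧸ Hs) := Subgroup.quotient_finite_of_isOpen _ hHsopen
  haveI : Hs.FiniteIndex := Hs.finiteIndex_of_finite_quotient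
  set N : Subgroup G := Hs.normalCore with hN
  haveI hNnormal : N.Normal := Hs.normalCore_normal
  haveI : N.FiniteIndex := Hs.finiteIndex_normalCore
  have hNle : N ≤ Hs := Hs.normalCore_le
  have hNrange : ∀ w ∈ N, w ∈ Set.range φ := by
    intro w hw
    rw [hrange, ← hHscoe]
    exact hNle hw
  have hidx : N.index ≠ 0 := Subgroup.FiniteIndex.index_ne_zero
  have hcentral : ∀ w ∈ N, ∀ g : G, g * w = w * g := by
    intro w hw g
    by_cases hg1 : g = 1
    · rw [hg1, one_mul, mul_one]
    have haN : g ^ N.index ∈ N := N.pow_index_mem g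
    have haa : g ^ N.index ≠ 1 := by
      intro h1
      exact htf g hg1 (isOfFinOrder_iff_pow_eq_one.mpr ⟨N.index, Nat.pos_of_ne_zero hidx, h1⟩)
    obtain ⟨α, hα⟩ := hNrange _ haN
    have hconj : ∀ u : ℤ_[p], φ u ∈ N → ∃ d : ℤ_[p],
        φ d = g * φ u * g⁻¹ ∧ ∀ x : ℤ_[p], g * φ (u * x) * g⁻¹ = φ (d * x) := by
      intro u hu
      have hmem : g * φ u * g⁻¹ ∈ N := hNnormal.conj_mem _ hu g
      obtain ⟨d, hd⟩ := hNrange _ hmem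
      refine ⟨d, hd, ?_⟩
      have hfeq : (fun x : ℤ_[p] => g * φ (u * x) * g⁻¹) = fun x => φ (d * x) := by
        apply aux_ext
        · have hc1 : Continuous fun x : ℤ_[p] => φ (u * x) :=
            hcont.comp (continuous_const.mul continuous_id)
          exact (continuous_const.mul hc1).mul continuous_const
        · exact hcont.comp (continuous_const.mul continuous_id)
        · intro n
          have h1 : u * (n : ℤ_[p]) = (n : ℤ_[p]) * u := mul_comm _ _
          have h2 : d * (n : ℤ_[p]) = (n : ℤ_[p]) * d := mul_comm _ _
          rw [h1, h2, hzsmul, hzsmul, hd, conj_zpow]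
      exact fun x => congrFun hfeq x
    obtain ⟨dα, hdα1, hdα2⟩ := hconj α (by rw [hα]; exact haN)
    have hgag : g * (g ^ N.index) * g⁻¹ = g ^ N.index := by
      rw [← pow_succ', pow_succ, mul_inv_cancel_right]
    have hdαeq : dα = α := hinj (by rw [hdα1, hα, hgag])
    obtain ⟨uw, huw⟩ := hNrange w hw
    obtain ⟨du, hdu1, hdu2⟩ := hconj uw (by rw [huw]; exact hw)
    have hb1 : g * φ (uw * α) * g⁻¹ = φ (du * α) := hdu2 α
    have hb2 : g * φ (α * uw) * g⁻¹ = φ (dα * uw) := hdα2 uw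
    have hb : du * α = dα * uw := hinj (by rw [← hb1, ← hb2, mul_comm uw α])
    have hα0 : α ≠ 0 := by
      intro h
      rw [h, h0] at hα
      exact haa hα.symm
    have hdueq : du = uw := by
      have h1 : du * α = uw * α := by rw [hb, hdαeq, mul_comm]
      exact mul_right_cancel₀ hα0 h1
    have h2 := hdu1
    rw [hdueq, huw] at h2
    have h3 : g * w * g⁻¹ = w := h2.symm
    calc g * w = g * w * g⁻¹ * g := by group
      _ = w * g := by rw [h3]
  have hNZ : N ≤ Subgroup.center G := fun w hw =>
    Subgroup.mem_center_iff.mpr fun g => hcentral w hw g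
  haveI hZfin : (Subgroup.center G).FiniteIndex :=
    ⟨ne_zero_of_dvd_ne_zero hidx (Subgroup.index_dvd_of_le hNZ)⟩
  set τ : G →* Subgroup.center G := MonoidHom.transferCenterPow G with hτdef
  have hτ : ∀ g : G, (τ g : G) = g ^ (Subgroup.center G).index := fun g =>
    MonoidHom.transferCenterPow_apply g
  set r := (N.subgroupOf (Subgroup.center G)).index with hr
  have hrel : r ≠ 0 := by
    intro h0r
    have h1 := Subgroup.relIndex_mul_index hNZ
    have h2 : N.relIndex (Subgroup.center G) = r := rfl
    rw [h2, h0r, zero_mul] at h1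
    exact hidx h1.symm
  haveI : (N.subgroupOf (Subgroup.center G)).Normal := Subgroup.normal_of_comm _
  set t := (Subgroup.center G).index * r with ht
  have htne : t ≠ 0 := Nat.mul_ne_zero Subgroup.FiniteIndex.index_ne_zero hrel
  have hcoe : ∀ x : G, x ^ t = ((τ x ^ r : ↥(Subgroup.center G)) : G) := by
    intro x
    rw [ht, pow_mul, ← hτ x, SubmonoidClass.coe_pow]
  have hψ₀N : ∀ g : G, g ^ t ∈ N := by
    intro g
    have h1 : (τ g) ^ r ∈ N.subgroupOf (Subgroup.center G) :=
      Subgroup.pow_index_mem _ (τ g)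
    have h2 := Subgroup.mem_subgroupOf.mp h1
    rw [hcoe g]
    exact h2
  have hψ₀hom : ∀ g k : G, (g * k) ^ t = g ^ t * k ^ t := by
    intro g k
    have h2 : (τ (g * k)) ^ r = (τ g) ^ r * (τ k) ^ r := by
      rw [map_mul]
      exact Commute.mul_pow (Subtype.ext (Subgroup.mem_center_iff.mp (τ k).2 (τ g))) r
    rw [hcoe (g * k), hcoe g, hcoe k, h2, Subgroup.coe_mul]
  have hψex : ∀ g : G, ∃ x, φ x = g ^ t := fun g => hNrange _ (hψ₀N g)
  choose ψ hψ using hψex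
  have hψhom : ∀ g k : G, ψ (g * k) = ψ g + ψ k := by
    intro g k
    apply hinj
    rw [hom, hψ, hψ, hψ, hψ₀hom]
  have hψ1 : ψ 1 = 0 := by
    apply hinj
    rw [hψ, h0, one_pow]
  have hψinv : ∀ g : G, ψ g⁻¹ = -ψ g := by
    intro g
    have h1 := hψhom g g⁻¹
    rw [mul_inv_cancel, hψ1] at h1
    exact eq_neg_of_add_eq_zero_right h1.symm
  have hψinj : Function.Injective ψ := by
    intro g k h
    have h1 : ψ (g * k⁻¹) = 0 := by rw [hψhom, hψinv, h, add_neg_cancel]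
    have h2 : (g * k⁻¹) ^ t = 1 := by
      have := hψ (g * k⁻¹)
      rw [h1, h0] at this
      exact this.symm
    by_cases hgk : g * k⁻¹ = 1
    · exact mul_inv_eq_one.mp hgk
    · exact absurd (isOfFinOrder_iff_pow_eq_one.mpr ⟨t, Nat.pos_of_ne_zero htne, h2⟩)
        (htf _ hgk)
  have hψcont : Continuous ψ := by
    have hφemb := hcont.isClosedEmbedding hinj
    rw [hφemb.isInducing.continuous_iff (g := φ)]
    have : φ ∘ ψ = fun g : G => g ^ t := funext fun g => hψ g
    rw [this]
    exact continuous_pow t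
  have hψz : ∀ (n : ℤ) (g : G), ψ (g ^ n) = (n : ℤ_[p]) * ψ g := by
    intro n g
    apply hinj
    calc φ (ψ (g ^ n)) = (g ^ n) ^ t := hψ _
      _ = (g ^ n) ^ (t : ℤ) := (zpow_natCast _ t).symm
      _ = (g ^ (t : ℤ)) ^ n := by rw [← zpow_mul, ← zpow_mul, mul_comm]
      _ = (g ^ t) ^ n := by rw [zpow_natCast]
      _ = φ (ψ g) ^ n := by rw [hψ]
      _ = φ ((n : ℤ_[p]) * ψ g) := (hzsmul n (ψ g)).symm
  have hSclosed : IsClosed (Set.range ψ) := (isCompact_range hψcont).isClosed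
  have hsmul_mem : ∀ z x : ℤ_[p], x ∈ Set.range ψ → z * x ∈ Set.range ψ := by
    rintro z _ ⟨g, rfl⟩
    have hsub : (fun w : ℤ_[p] => w * ψ g) '' Set.range ((↑) : ℤ → ℤ_[p]) ⊆ Set.range ψ := by
      rintro _ ⟨_, ⟨n, rfl⟩, rfl⟩
      exact ⟨g ^ n, hψz n g⟩
    have hzc : z ∈ closure (Set.range ((↑) : ℤ → ℤ_[p])) := PadicInt.denseRange_intCast z
    have hcm : Continuous fun w : ℤ_[p] => w * ψ g := continuous_id.mul continuous_const
    have h1 : z * ψ g ∈ closure ((fun w : ℤ_[p] => w * ψ g) '' Set.range ((↑) : ℤ → ℤ_[p])) :=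
      (image_closure_subset_closure_image hcm) ⟨z, hzc, rfl⟩
    have h2 : closure ((fun w : ℤ_[p] => w * ψ g) '' Set.range ((↑) : ℤ → ℤ_[p])) ⊆
        Set.range ψ := by
      rw [← hSclosed.closure_eq]
      exact closure_mono hsub
    exact h2 h1
  set S : Ideal ℤ_[p] :=
    { carrier := Set.range ψ
      add_mem' := by
        rintro a b ⟨g, rfl⟩ ⟨k, rfl⟩
        exact ⟨g * k, hψhom g k⟩
      zero_mem' := ⟨1, hψ1⟩
      smul_mem' := by
        intro c x hx
        rw [smul_eq_mul]
        exact hsmul_mem c x hx } with hSdef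
  have hSne : S ≠ ⊥ := by
    intro hbot
    have hm : ψ h₀ ∈ S := ⟨h₀, rfl⟩
    rw [hbot, Ideal.mem_bot] at hm
    exact hne (hψinj (by rw [hm, hψ1]))
  obtain ⟨k, hk⟩ := PadicInt.ideal_eq_span_pow_p hSne
  set π : ℤ_[p] := (p : ℤ_[p]) ^ k with hπ
  have hπ0 : π ≠ 0 :=
    pow_ne_zero _ (Nat.cast_ne_zero.mpr (Fact.out : p.Prime).ne_zero)
  have hmemS : ∀ x : ℤ_[p], x ∈ Set.range ψ ↔ ∃ c, c * π = x := by
    intro x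
    have : x ∈ Set.range ψ ↔ x ∈ S := Iff.rfl
    rw [this, hk, hπ]
    exact Ideal.mem_span_singleton'
  have hef : ∀ g : G, ∃ c, c * π = ψ g := fun g => (hmemS (ψ g)).mp ⟨g, rfl⟩
  choose ef hef' using hef
  have hginv : ∀ z : ℤ_[p], ∃ g : G, ψ g = z * π := by
    intro z
    have : z * π ∈ Set.range ψ := (hmemS _).mpr ⟨z, rfl⟩
    obtain ⟨g, hg⟩ := this
    exact ⟨g, hg⟩
  choose gi hgi using hginv
  have hefcont : Continuous ef := by
    have hμc : Continuous fun w : ℤ_[p] => w * π := continuous_id.mul continuous_const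
    have hμinj : Function.Injective fun w : ℤ_[p] => w * π := fun a b h =>
      mul_right_cancel₀ hπ0 h
    have hμemb := hμc.isClosedEmbedding hμinj
    rw [hμemb.isInducing.continuous_iff (g := fun w : ℤ_[p] => w * π)]
    have : (fun w : ℤ_[p] => w * π) ∘ ef = ψ := funext fun g => hef' g
    rw [this]
    exact hψcont
  refine ⟨{ toFun := fun g => Multiplicative.ofAdd (ef g)
            invFun := fun z => gi z.toAdd
            left_inv := ?_
            right_inv := ?_
            map_mul' := ?_ }, ?_⟩
  · intro g
    apply hψinj
    rw [hgi, toAdd_ofAdd, hef']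
  · intro z
    have h1 : ef (gi z.toAdd) = z.toAdd := by
      apply mul_right_cancel₀ hπ0
      rw [hef', hgi]
    simp only [h1]
    exact ofAdd_toAdd z
  · intro g k
    have h1 : ef (g * k) = ef g + ef k := by
      apply mul_right_cancel₀ hπ0
      rw [hef', hψhom, ← hef' g, ← hef' k]
      ring
    simp only [h1]
    rfl
  · exact continuous_ofAdd.comp hefcont

end Aux

/-- A torsion-free pro-`p` group containing an open procyclic subgroup is
itself procyclic, namely isomorphic (as a topological group) to `ℤ_p` or trivial. -/
theorem stmt_8 (p : ℕ) [Fact p.Prime] (G : Type*) [Group G] [TopologicalSpace G]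
    [IsTopologicalGroup G] [CompactSpace G] [TotallyDisconnectedSpace G] [T2Space G]
    (hGp : IsProP p G) (htf : ∀ g : G, g ≠ 1 → ¬IsOfFinOrder g)
    (H : Subgroup G) (hHopen : IsOpen (H : Set G)) (hH : IsProcyclic H) :
    IsProcyclic G ∧
      (Subsingleton G ∨ ∃ e : G ≃* Multiplicative ℤ_[p], Continuous e) := by
  by_cases hsub : Subsingleton G
  · refine ⟨⟨1, ?_⟩, Or.inl hsub⟩
    intro x
    have hx : x = 1 := Subsingleton.elim x 1
    rw [hx]
    exact subset_closure (Subgroup.one_mem (Subgroup.zpowers (1 : G)))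
  · obtain ⟨gH, hgH⟩ := hH
    set h₀ : G := (gH : G) with hh₀
    have hHclosed : IsClosed (H : Set G) := H.isClosed_of_isOpen hHopen
    have hemb : Topology.IsClosedEmbedding ((↑) : H → G) :=
      hHclosed.isClosedEmbedding_subtypeVal
    have himg : (Subtype.val '' ((Subgroup.zpowers gH : Subgroup H) : Set H)) =
        ((Subgroup.zpowers h₀ : Subgroup G) : Set G) := by
      ext x
      constructor
      · rintro ⟨y, hy, rfl⟩
        obtain ⟨n, rfl⟩ := Subgroup.mem_zpowers_iff.mp hy
        exact Subgroup.mem_zpowers_iff.mpr ⟨n, by simp [hh₀]⟩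
      · rintro hx
        obtain ⟨n, rfl⟩ := Subgroup.mem_zpowers_iff.mp hx
        exact ⟨gH ^ n, Subgroup.mem_zpowers_iff.mpr ⟨n, rfl⟩, by simp [hh₀]⟩
    have hcl : closure ((Subgroup.zpowers h₀ : Subgroup G) : Set G) = (H : Set G) := by
      rw [← himg, hemb.closure_image_eq, hgH.closure_eq, Set.image_univ, Subtype.range_coe]
    have hopen : IsOpen (closure ((Subgroup.zpowers h₀ : Subgroup G) : Set G)) := by
      rw [hcl]; exact hHopen
    have hne : h₀ ≠ 1 := by
      intro h1
      have hz : (Subgroup.zpowers h₀ : Subgroup G) = ⊥ := by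
        rw [h1]; exact Subgroup.zpowers_one_eq_bot
      have hHone : (H : Set G) = {1} := by
        rw [← hcl, hz]
        have : ((⊥ : Subgroup G) : Set G) = {1} := Subgroup.coe_bot
        rw [this, isClosed_singleton.closure_eq]
      have hdisc : DiscreteTopology G := discreteTopology_of_isOpen_singleton_one
        (by rw [← hHone]; exact hHopen)
      have hfin : Finite G := finite_of_compact_of_discrete
      haveI : Nontrivial G := not_subsingleton_iff_nontrivial.mp hsub
      obtain ⟨x, hx⟩ := exists_ne (1 : G)
      exact htf x hx (isOfFinOrder_of_finite x)
    obtain ⟨e, he⟩ := aux_main hGp htf h₀ hne hopen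
    refine ⟨?_, Or.inr ⟨e, he⟩⟩
    have he' : Continuous (⇑e.toEquiv) := he
    have hesymm : Continuous (⇑e.symm : Multiplicative ℤ_[p] → G) :=
      he'.continuous_symm_of_equiv_compact_to_t2
    set g₀ : G := e.symm (Multiplicative.ofAdd 1) with hg₀
    refine ⟨g₀, ?_⟩
    set F : ℤ_[p] → G := fun z => e.symm (Multiplicative.ofAdd z) with hF
    have hFcont : Continuous F := hesymm.comp continuous_ofAdd
    have hFsurj : Function.Surjective F := by
      intro g
      exact ⟨(e g).toAdd, by rw [hF]; simp⟩
    have hdr : DenseRange (F ∘ (fun n : ℤ => (n : ℤ_[p]))) :=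
      DenseRange.comp hFsurj.denseRange PadicInt.denseRange_intCast hFcont
    have hfe : (F ∘ fun n : ℤ => ((n : ℤ_[p]))) = fun n : ℤ => g₀ ^ n := by
      funext n
      have h1 : (Multiplicative.ofAdd ((1 : ℤ_[p]))) ^ n = Multiplicative.ofAdd ((n : ℤ_[p])) := by
        rw [← ofAdd_zsmul]
        congr 1
        rw [zsmul_eq_mul, mul_one]
      calc F ((n : ℤ_[p])) = e.symm (Multiplicative.ofAdd ((n : ℤ_[p]))) := rfl
        _ = e.symm ((Multiplicative.ofAdd ((1 : ℤ_[p]))) ^ n) := by rw [h1]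
        _ = g₀ ^ n := by rw [map_zpow, hg₀]
    rw [hfe] at hdr
    have hsubset : Set.range (fun n : ℤ => g₀ ^ n) ⊆
        ((Subgroup.zpowers g₀ : Subgroup G) : Set G) := by
      rintro _ ⟨n, rfl⟩
      exact Subgroup.mem_zpowers_iff.mpr ⟨n, rfl⟩
    exact Dense.mono hsubset hdr
end
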